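/- Under assumptions (A1)–(A3), the Nemytskii operator N_F : C^0([0,T], C^0([-r,0], ℝ^n)) × C^0([0,T], ℝ^n) → C^0([0,T], ℝ), N_F(U,v) := (t ↦ F(t, U(t), v(t))), is of class C^1, and DN_F(U,v)·(δU, δv) = (t ↦ D_2F(t,U(t),v(t))·δU(t) + D_3F(t,U(t),v(t))·δv(t)). -/

import Mathlib

set_option linter.unusedSectionVars false

open ContinuousMap

section aux

lemma aux_unif {α β : Type*} [PseudoMetricSpace α] [PseudoMetricSpace β] {f : α → β}
    (hf : Continuous f) {K : Set α} (hK : IsCompact K) {ε : ℝ} (hε : 0 < ε) :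
    ∃ δ > 0, ∀ x ∈ K, ∀ y, dist x y < δ → dist (f x) (f y) < ε := by
  have h := hK.uniformContinuousAt_of_continuousAt f (fun a _ => hf.continuousAt)
    (Metric.dist_mem_uniformity hε)
  rcases Metric.mem_uniformity_dist.1 h with ⟨δ, hδ, H⟩
  exact ⟨δ, hδ, fun x hx y hxy => H hxy hx⟩

variable {ι : Type*} [TopologicalSpace ι] [CompactSpace ι]
variable {E F G : Type*} [NormedAddCommGroup E] [NormedSpace ℝ E]
  [NormedAddCommGroup F] [NormedSpace ℝ F] [NormedAddCommGroup G] [NormedSpace ℝ G]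

/-- pointwise evaluation of a continuous family of CLMs -/
noncomputable def auxEval (γ : C(ι, E →L[ℝ] F)) (u : C(ι, E)) : C(ι, F) :=
  ⟨fun t => γ t (u t), isBoundedBilinearMap_apply.continuous.comp
    (γ.continuous.prodMk u.continuous)⟩

@[simp] lemma auxEval_apply (γ : C(ι, E →L[ℝ] F)) (u : C(ι, E)) (t : ι) :
    auxEval γ u t = γ t (u t) := rfl

lemma auxEval_add_left (γ γ' : C(ι, E →L[ℝ] F)) (u : C(ι, E)) :
    auxEval (γ + γ') u = auxEval γ u + auxEval γ' u := by
  ext t; simp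

lemma auxEval_smul_left (c : ℝ) (γ : C(ι, E →L[ℝ] F)) (u : C(ι, E)) :
    auxEval (c • γ) u = c • auxEval γ u := by
  ext t; simp

lemma auxEval_add_right (γ : C(ι, E →L[ℝ] F)) (u u' : C(ι, E)) :
    auxEval γ (u + u') = auxEval γ u + auxEval γ u' := by
  ext t; simp

lemma auxEval_smul_right (c : ℝ) (γ : C(ι, E →L[ℝ] F)) (u : C(ι, E)) :
    auxEval γ (c • u) = c • auxEval γ u := by
  ext t; simp

lemma auxEval_norm (γ : C(ι, E →L[ℝ] F)) (u : C(ι, E)) : ‖auxEval γ u‖ ≤ ‖γ‖ * ‖u‖ := by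
  refine (ContinuousMap.norm_le _ (by positivity)).2 fun t => ?_
  calc ‖γ t (u t)‖ ≤ ‖γ t‖ * ‖u t‖ := (γ t).le_opNorm _
    _ ≤ ‖γ‖ * ‖u‖ := by
        gcongr
        · exact γ.norm_coe_le_norm t
        · exact u.norm_coe_le_norm t

/-- pointwise evaluation by a fixed family, as a continuous linear map -/
noncomputable def auxA1 (γ : C(ι, E →L[ℝ] F)) : C(ι, E) →L[ℝ] C(ι, F) :=
  LinearMap.mkContinuous
    { toFun := auxEval γ
      map_add' := auxEval_add_right γ
      map_smul' := fun c u => auxEval_smul_right c γ u }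
    ‖γ‖ (fun u => auxEval_norm γ u)

@[simp] lemma auxA1_apply (γ : C(ι, E →L[ℝ] F)) (u : C(ι, E)) (t : ι) :
    auxA1 γ u t = γ t (u t) := rfl

/-- `auxA1` as a linear map -/
noncomputable def auxAlin : C(ι, E →L[ℝ] F) →ₗ[ℝ] (C(ι, E) →L[ℝ] C(ι, F)) where
  toFun := auxA1
  map_add' := fun γ γ' => by ext u t; simp
  map_smul' := fun c γ => by ext u t; simp

/-- pointwise evaluation, as a continuous bilinear map -/
noncomputable def auxA : C(ι, E →L[ℝ] F) →L[ℝ] (C(ι, E) →L[ℝ] C(ι, F)) :=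
  ⟨auxAlin (ι := ι) (E := E) (F := F), by exact AddMonoidHomClass.continuous_of_bound (auxAlin (ι := ι) (E := E) (F := F)) 1 (fun γ =>
    le_trans (ContinuousLinearMap.opNorm_le_bound (auxA1 γ) (norm_nonneg γ)
      (fun u => auxEval_norm γ u)) (le_of_eq (one_mul _).symm))⟩

@[simp] lemma auxA_apply (γ : C(ι, E →L[ℝ] F)) (u : C(ι, E)) (t : ι) :
    auxA (ι := ι) (E := E) (F := F) γ u t = γ t (u t) := rfl

/-- pairing, as a continuous linear map -/
noncomputable def auxJ : (C(ι, E) × C(ι, F)) →L[ℝ] C(ι, E × F) :=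
  LinearMap.mkContinuous
    { toFun := fun p => p.1.prodMk p.2
      map_add' := fun p q => by ext t <;> rfl
      map_smul' := fun c p => by ext t <;> rfl }
    1 (fun p => by
      rw [one_mul]
      refine (ContinuousMap.norm_le _ (norm_nonneg _)).2 fun t => ?_
      calc ‖((p.1.prodMk p.2) t : E × F)‖ = max ‖p.1 t‖ ‖p.2 t‖ := rfl
        _ ≤ max ‖p.1‖ ‖p.2‖ := max_le_max (p.1.norm_coe_le_norm t) (p.2.norm_coe_le_norm t)
        _ = ‖p‖ := rfl)

@[simp] lemma auxJ_apply (p : C(ι, E) × C(ι, F)) (t : ι) :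
    (auxJ p) t = (p.1 t, p.2 t) := rfl

end aux

set_option maxHeartbeats 2000000 in
theorem aux_main {ι : Type*} [PseudoMetricSpace ι] [CompactSpace ι]
    {E F G : Type*} [NormedAddCommGroup E] [NormedSpace ℝ E]
    [NormedAddCommGroup F] [NormedSpace ℝ F] [NormedAddCommGroup G] [NormedSpace ℝ G]
    (f : ι → E → F → G)
    (D₂ : ι → E → F → (E →L[ℝ] G))
    (hD₂ : ∀ t φ v, HasFDerivAt (fun ψ => f t ψ v) (D₂ t φ v) φ)
    (hD₂c : Continuous fun p : ι × E × F => D₂ p.1 p.2.1 p.2.2)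
    (D₃ : ι → E → F → (F →L[ℝ] G))
    (hD₃ : ∀ t φ v, HasFDerivAt (fun w => f t φ w) (D₃ t φ v) v)
    (hD₃c : Continuous fun p : ι × E × F => D₃ p.1 p.2.1 p.2.2)
    (N : C(ι, E) × C(ι, F) → C(ι, G))
    (hN : ∀ q t, N q t = f t (q.1 t) (q.2 t)) :
    ∃ DN : (C(ι, E) × C(ι, F)) → ((C(ι, E) × C(ι, F)) →L[ℝ] C(ι, G)),
      (∀ p, HasFDerivAt N (DN p) p) ∧ Continuous DN ∧
      ∀ U v δU δv t, DN (U, v) (δU, δv) t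
        = D₂ t (U t) (v t) (δU t) + D₃ t (U t) (v t) (δv t) := by
  set G2 : C(ι × E × F, (E × F) →L[ℝ] G) :=
    ⟨fun q => (D₂ q.1 q.2.1 q.2.2).comp (ContinuousLinearMap.fst ℝ E F)
      + (D₃ q.1 q.2.1 q.2.2).comp (ContinuousLinearMap.snd ℝ E F),
      (hD₂c.clm_comp continuous_const).add (hD₃c.clm_comp continuous_const)⟩ with hG2
  set Γ : C(ι, E) × C(ι, F) → C(ι, (E × F) →L[ℝ] G) :=
    fun p => G2.comp ((ContinuousMap.id ι).prodMk (auxJ p)) with hΓdef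
  set DN0 : (C(ι, E) × C(ι, F)) → ((C(ι, E) × C(ι, F)) →L[ℝ] C(ι, G)) :=
    fun p => (auxA (ι := ι) (E := E × F) (F := G) (Γ p)).comp auxJ with hDN0
  have hform : ∀ (p q : C(ι, E) × C(ι, F)) (t : ι),
      DN0 p q t
        = D₂ t (p.1 t) (p.2 t) (q.1 t) + D₃ t (p.1 t) (p.2 t) (q.2 t) := fun p q t => rfl
  refine ⟨DN0, ?_, ?_, ?_⟩
  · -- derivative
    intro p
    rw [hasFDerivAt_iff_isLittleO_nhds_zero, Asymptotics.isLittleO_iff]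
    intro c hc
    set K := Set.range (fun t : ι => ((t, (p.1 t, p.2 t)) : ι × E × F)) with hKdef
    have hKc : IsCompact K := isCompact_range
      (continuous_id.prodMk ((map_continuous p.1).prodMk (map_continuous p.2)))
    obtain ⟨δ₂, hδ₂p, hδ₂⟩ := aux_unif hD₂c hKc (half_pos hc)
    obtain ⟨δ₃, hδ₃p, hδ₃⟩ := aux_unif hD₃c hKc (half_pos hc)
    rw [Metric.eventually_nhds_iff]
    refine ⟨min δ₂ δ₃, lt_min hδ₂p hδ₃p, fun h hd => ?_⟩
    rw [dist_zero_right] at hd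
    refine (ContinuousMap.norm_le _ (by positivity)).2 fun t => ?_
    have e1 : (N (p + h) - N p - DN0 p h) t
        = f t (p.1 t + h.1 t) (p.2 t + h.2 t) - f t (p.1 t) (p.2 t)
          - (D₂ t (p.1 t) (p.2 t) (h.1 t) + D₃ t (p.1 t) (p.2 t) (h.2 t)) := by
      rw [ContinuousMap.sub_apply, ContinuousMap.sub_apply, hN, hN, hform]
      rfl
    rw [e1]
    set φ := p.1 t with hφ
    set v := p.2 t with hv
    set a := h.1 t with ha'
    set b := h.2 t with hb'
    have ha : ‖a‖ ≤ ‖h‖ := le_trans (h.1.norm_coe_le_norm t) (norm_fst_le h)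
    have hb : ‖b‖ ≤ ‖h‖ := le_trans (h.2.norm_coe_le_norm t) (norm_snd_le h)
    have hmem : ((t, (φ, v)) : ι × E × F) ∈ K := ⟨t, rfl⟩
    have hT1 : ‖f t (φ + a) (v + b) - f t φ (v + b) - (D₂ t φ v) a‖ ≤ c / 2 * ‖a‖ := by
      have H := (convex_segment φ (φ + a)).norm_image_sub_le_of_norm_hasFDerivWithin_le'
        (f := fun ψ => f t ψ (v + b)) (f' := fun ψ => D₂ t ψ (v + b)) (φ := D₂ t φ v)
        (C := c / 2)
        (fun ψ _ => (hD₂ t ψ (v + b)).hasFDerivWithinAt)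
        (fun ψ hψ => by
          rw [segment_eq_image'] at hψ
          obtain ⟨θ, hθ, rfl⟩ := hψ
          have hdist : dist ((t, (φ, v)) : ι × E × F) (t, (φ + θ • (φ + a - φ), v + b)) < δ₂ := by
            rw [Prod.dist_eq, Prod.dist_eq]
            have h1 : dist t t = 0 := dist_self t
            have h2 : dist φ (φ + θ • (φ + a - φ)) < δ₂ := by
              rw [dist_self_add_right]
              calc ‖θ • (φ + a - φ)‖ ≤ ‖a‖ := by
                    rw [add_sub_cancel_left, norm_smul]
                    calc ‖θ‖ * ‖a‖ ≤ 1 * ‖a‖ := by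
                          gcongr
                          rw [Real.norm_eq_abs, abs_le]
                          exact ⟨by linarith [hθ.1], hθ.2⟩
                      _ = ‖a‖ := one_mul _
                _ ≤ ‖h‖ := ha
                _ < δ₂ := lt_of_lt_of_le hd (min_le_left _ _)
            have h3 : dist v (v + b) < δ₂ := by
              rw [dist_self_add_right]
              exact lt_of_le_of_lt hb (lt_of_lt_of_le hd (min_le_left _ _))
            rw [h1]
            exact max_lt hδ₂p (max_lt h2 h3)
          have := hδ₂ _ hmem _ hdist
          rw [← dist_eq_norm, dist_comm]
          exact le_of_lt this)
        (left_mem_segment ℝ _ _) (right_mem_segment ℝ _ _)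
      simpa [add_sub_cancel_left] using H
    have hT2 : ‖f t φ (v + b) - f t φ v - (D₃ t φ v) b‖ ≤ c / 2 * ‖b‖ := by
      have H := (convex_segment v (v + b)).norm_image_sub_le_of_norm_hasFDerivWithin_le'
        (f := fun w => f t φ w) (f' := fun w => D₃ t φ w) (φ := D₃ t φ v)
        (C := c / 2)
        (fun w _ => (hD₃ t φ w).hasFDerivWithinAt)
        (fun w hw => by
          rw [segment_eq_image'] at hw
          obtain ⟨θ, hθ, rfl⟩ := hw
          have hdist : dist ((t, (φ, v)) : ι × E × F) (t, (φ, v + θ • (v + b - v))) < δ₃ := by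
            rw [Prod.dist_eq, Prod.dist_eq]
            have h3 : dist v (v + θ • (v + b - v)) < δ₃ := by
              rw [dist_self_add_right]
              calc ‖θ • (v + b - v)‖ ≤ ‖b‖ := by
                    rw [add_sub_cancel_left, norm_smul]
                    calc ‖θ‖ * ‖b‖ ≤ 1 * ‖b‖ := by
                          gcongr
                          rw [Real.norm_eq_abs, abs_le]
                          exact ⟨by linarith [hθ.1], hθ.2⟩
                      _ = ‖b‖ := one_mul _
                _ ≤ ‖h‖ := hb
                _ < δ₃ := lt_of_lt_of_le hd (min_le_right _ _)
            rw [dist_self, dist_self]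
            exact max_lt hδ₃p (max_lt hδ₃p h3)
          have := hδ₃ _ hmem _ hdist
          rw [← dist_eq_norm, dist_comm]
          exact le_of_lt this)
        (left_mem_segment ℝ _ _) (right_mem_segment ℝ _ _)
      simpa [add_sub_cancel_left] using H
    calc ‖f t (φ + a) (v + b) - f t φ v - ((D₂ t φ v) a + (D₃ t φ v) b)‖
        = ‖(f t (φ + a) (v + b) - f t φ (v + b) - (D₂ t φ v) a)
            + (f t φ (v + b) - f t φ v - (D₃ t φ v) b)‖ := by congr 1; abel
      _ ≤ ‖f t (φ + a) (v + b) - f t φ (v + b) - (D₂ t φ v) a‖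
            + ‖f t φ (v + b) - f t φ v - (D₃ t φ v) b‖ := norm_add_le _ _
      _ ≤ c / 2 * ‖a‖ + c / 2 * ‖b‖ := add_le_add hT1 hT2
      _ ≤ c * ‖h‖ := by nlinarith [norm_nonneg h]
  · -- continuity
    have hJlip : LipschitzWith 1 (fun u : C(ι, E × F) => (ContinuousMap.id ι).prodMk u) := by
      apply LipschitzWith.of_dist_le_mul
      intro u u'
      rw [NNReal.coe_one, one_mul]
      refine (ContinuousMap.dist_le dist_nonneg).2 fun t => ?_
      rw [Prod.dist_eq]
      show dist t t ⊔ dist (u t) (u' t) ≤ dist u u'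
      rw [dist_self]
      exact max_le dist_nonneg (ContinuousMap.dist_apply_le_dist t)
    have hΓcont : Continuous Γ :=
      (ContinuousMap.continuous_postcomp G2).comp (hJlip.continuous.comp auxJ.continuous)
    exact (auxA.continuous.comp hΓcont).clm_comp continuous_const
  · intro U v δU δv t
    exact hform (U, v) (δU, δv) t


/-- Under (A1)–(A3), the Nemytskii operator
`N_F : C^0([0,T], C^0([-r,0], R^n)) × C^0([0,T], R^n) → C^0([0,T], R)`,
`N_F(U,v) = (t ↦ F(t, U(t), v(t)))`, is of class `C¹` with
`DN_F(U,v)·(δU,δv) = (t ↦ D₂F(t,U(t),v(t))·δU(t) + D₃F(t,U(t),v(t))·δv(t))`. -/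
theorem stmt_13 (r T : ℝ) (hr : 0 < r) (hrT : r < T) (n : ℕ)
    (F : Set.Icc (0 : ℝ) T → C(Set.Icc (-r) (0 : ℝ), Fin n → ℝ) → (Fin n → ℝ) → ℝ)
    -- (A1)
    (hF : Continuous fun p : Set.Icc (0 : ℝ) T × C(Set.Icc (-r) (0 : ℝ), Fin n → ℝ) ×
        (Fin n → ℝ) => F p.1 p.2.1 p.2.2)
    -- (A2)
    (D₂F : Set.Icc (0 : ℝ) T → C(Set.Icc (-r) (0 : ℝ), Fin n → ℝ) → (Fin n → ℝ) →
      (C(Set.Icc (-r) (0 : ℝ), Fin n → ℝ) →L[ℝ] ℝ))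
    (hD₂ : ∀ t φ v, HasFDerivAt (fun ψ => F t ψ v) (D₂F t φ v) φ)
    (hD₂c : Continuous fun p : Set.Icc (0 : ℝ) T × C(Set.Icc (-r) (0 : ℝ), Fin n → ℝ) ×
        (Fin n → ℝ) => D₂F p.1 p.2.1 p.2.2)
    -- (A3)
    (D₃F : Set.Icc (0 : ℝ) T → C(Set.Icc (-r) (0 : ℝ), Fin n → ℝ) → (Fin n → ℝ) →
      ((Fin n → ℝ) →L[ℝ] ℝ))
    (hD₃ : ∀ t φ v, HasFDerivAt (fun w => F t φ w) (D₃F t φ v) v)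
    (hD₃c : Continuous fun p : Set.Icc (0 : ℝ) T × C(Set.Icc (-r) (0 : ℝ), Fin n → ℝ) ×
        (Fin n → ℝ) => D₃F p.1 p.2.1 p.2.2) :
    ∃ DN : (C(Set.Icc (0 : ℝ) T, C(Set.Icc (-r) (0 : ℝ), Fin n → ℝ)) ×
          C(Set.Icc (0 : ℝ) T, Fin n → ℝ)) →
        ((C(Set.Icc (0 : ℝ) T, C(Set.Icc (-r) (0 : ℝ), Fin n → ℝ)) ×
          C(Set.Icc (0 : ℝ) T, Fin n → ℝ)) →L[ℝ] C(Set.Icc (0 : ℝ) T, ℝ)),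
      (∀ p : C(Set.Icc (0 : ℝ) T, C(Set.Icc (-r) (0 : ℝ), Fin n → ℝ)) ×
          C(Set.Icc (0 : ℝ) T, Fin n → ℝ),
        HasFDerivAt (𝕜 := ℝ)
          (fun q : C(Set.Icc (0 : ℝ) T, C(Set.Icc (-r) (0 : ℝ), Fin n → ℝ)) ×
              C(Set.Icc (0 : ℝ) T, Fin n → ℝ) =>
            (⟨fun t => F t (q.1 t) (q.2 t),
              hF.comp (continuous_id.prodMk
                (q.1.continuous.prodMk q.2.continuous))⟩ : C(Set.Icc (0 : ℝ) T, ℝ)))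
          (DN p) p) ∧
      Continuous DN ∧
      ∀ (U : C(Set.Icc (0 : ℝ) T, C(Set.Icc (-r) (0 : ℝ), Fin n → ℝ)))
        (v : C(Set.Icc (0 : ℝ) T, Fin n → ℝ)) (δU : _) (δv : _) (t : Set.Icc (0 : ℝ) T),
        DN (U, v) (δU, δv) t =
          D₂F t (U t) (v t) (δU t) + D₃F t (U t) (v t) (δv t) := by
  obtain ⟨DN, h1, h2, h3⟩ := aux_main F D₂F hD₂ hD₂c D₃F hD₃ hD₃c
    (fun q => ⟨fun t => F t (q.1 t) (q.2 t),
      hF.comp (continuous_id.prodMk (q.1.continuous.prodMk q.2.continuous))⟩)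
    (fun q t => rfl)
  exact ⟨DN, h1, h2, h3⟩
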